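/- Let 0 < q < 1/2 and let f be a solution of Schilling's problem. Then for every x ∈ (Q-1, 1-Q) and every nonnegative integer m, f(qᵐ·x) = (1/(2q))ᵐ · f(x). -/

import Mathlib

theorem schilling_scaling (q : ℝ) (hq : 0 < q) (hq1 : q < 1 / 2)
    (f : ℝ → ℝ)
    (heq : ∀ x : ℝ, f (q * x) = 1 / (4 * q) * (f (x - 1) + f (x + 1) + 2 * f x))
    (hQ : ∀ x : ℝ, |x| > q / (1 - q) → f x = 0) :
    ∀ x : ℝ, q / (1 - q) - 1 < x → x < 1 - q / (1 - q) →
      ∀ m : ℕ, f (q ^ m * x) = (1 / (2 * q)) ^ m * f x := by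
  intro x hx1 hx2 m
  set Q := q / (1 - q) with hQdef
  have hq1' : (0:ℝ) < 1 - q := by linarith
  have hQpos : 0 < Q := div_pos hq hq1'
  induction m with
  | zero => simp
  | succ n ih =>
    have habs : |q ^ n * x| < 1 - Q := by
      have hxabs : |x| < 1 - Q := abs_lt.mpr ⟨by linarith, hx2⟩
      have hqn : q ^ n ≤ 1 := pow_le_one₀ hq.le (by linarith)
      calc |q ^ n * x| = q ^ n * |x| := by
            rw [abs_mul, abs_of_nonneg (pow_nonneg hq.le n)]
        _ ≤ 1 * |x| := by
            apply mul_le_mul_of_nonneg_right hqn (abs_nonneg x)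
        _ = |x| := one_mul _
        _ < 1 - Q := hxabs
    have hQ1 : Q < 1 := by
      rw [hQdef, div_lt_one hq1']; linarith
    have hlt := abs_lt.mp habs
    have h1 : f (q ^ n * x - 1) = 0 := by
      apply hQ
      rw [abs_sub_comm, gt_iff_lt, lt_abs]
      left; linarith [hlt.1]
    have h2 : f (q ^ n * x + 1) = 0 := by
      apply hQ
      rw [gt_iff_lt, lt_abs]
      left; linarith [hlt.2]
    have : f (q ^ (n+1) * x) = f (q * (q ^ n * x)) := by ring_nf
    rw [this, heq, h1, h2, ih]
    field_simp
    ring_nf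
    rw [mul_inv_cancel₀ hq.ne']
    ring
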